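/- Suppose α_n(t) solve the Schur flow with |α_n(t)| < 1 for all t ≥ 0, the limits γ_n = lim_{t→∞} Re(conj(α_n(t))α_{n-1}(t)) exist, γ_n is nondecreasing, and the right-hand sides -(n+1)α_n/(t(1-α_n²)) = α_{n+1} + α_{n-1} of the discrete Painlevé II relation are bounded in t for each n (real case). If γ_k < γ_{k+1} for some k, then 1 - α_k(t)² ≤ C e^{-δt} for some C, δ > 0, which forces |α_k(t)|/(t(1-α_k(t)²)) → +∞ as t → ∞ — a contradiction. Hence all γ_n are equal. -/

import Mathlib

open Filter Real Set

theorem stmt16 (α : ℤ → ℝ → ℝ) (γ : ℤ → ℝ)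
    (hneg : ∀ t, α (-1) t = -1)
    (hmem : ∀ n : ℤ, 0 ≤ n → ∀ t : ℝ, 0 ≤ t → |α n t| < 1)
    (hflow : ∀ n : ℤ, 0 ≤ n → ∀ t : ℝ, 0 < t →
      HasDerivAt (α n) ((1 - α n t ^ 2) * (α (n + 1) t - α (n - 1) t)) t)
    (hP2 : ∀ n : ℤ, 0 ≤ n → ∀ t : ℝ, 0 < t →
      -((n : ℝ) + 1) * α n t / (t * (1 - α n t ^ 2)) = α (n + 1) t + α (n - 1) t)
    (hγ : ∀ n : ℤ, 0 ≤ n →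
      Filter.Tendsto (fun t => α n t * α (n - 1) t) Filter.atTop (nhds (γ n)))
    (hmono : ∀ n : ℤ, 0 ≤ n → γ n ≤ γ (n + 1)) :
    ∀ m n : ℤ, 0 ≤ m → 0 ≤ n → γ m = γ n := by
  have key : ∀ k : ℤ, 0 ≤ k → γ (k + 1) ≤ γ k := by
    intro k hk
    by_contra hlt
    push_neg at hlt
    set ε := (γ (k + 1) - γ k) / 2 with hεdef
    have hε : 0 < ε := by simp only [hεdef]; linarith
    have h1 := hγ (k + 1) (by linarith)
    have h1' : Tendsto (fun t => α (k + 1) t * α k t) atTop (nhds (γ (k + 1))) := by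
      simpa using h1
    have hdiff := h1'.sub (hγ k hk)
    have hev : ∀ᶠ t in atTop, ε ≤ α (k + 1) t * α k t - α k t * α (k - 1) t :=
      hdiff.eventually (eventually_ge_nhds (by simp only [hεdef]; linarith))
    obtain ⟨T₀, hT₀⟩ := eventually_atTop.mp hev
    set T : ℝ := max T₀ 1 with hTdef
    have hT1 : (1 : ℝ) ≤ T := le_max_right _ _
    have hTpos : (0 : ℝ) < T := lt_of_lt_of_le zero_lt_one hT1
    -- derivative of f = 1 - α k ^ 2
    have hf : ∀ t : ℝ, 0 < t → HasDerivAt (fun s => 1 - α k s ^ 2)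
        (-(2 * α k t * ((1 - α k t ^ 2) * (α (k + 1) t - α (k - 1) t)))) t := by
      intro t ht
      have h := (hflow k hk t ht).pow 2
      have h2 := (hasDerivAt_const t (1 : ℝ)).sub h
      exact h2.congr_deriv (by norm_num)
    have hge : ∀ t : ℝ, HasDerivAt (fun s => Real.exp (2 * ε * s))
        (2 * ε * Real.exp (2 * ε * t)) t := by
      intro t
      have := ((hasDerivAt_id t).const_mul (2 * ε)).exp
      simpa [mul_comm] using this
    have hpos : ∀ t : ℝ, 0 ≤ t → 0 < 1 - α k t ^ 2 := by
      intro t ht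
      have := abs_lt.mp (hmem k hk t ht)
      nlinarith
    have hanti : AntitoneOn (fun s => (1 - α k s ^ 2) * Real.exp (2 * ε * s)) (Set.Ici T) := by
      apply antitoneOn_of_deriv_nonpos (convex_Ici T)
      · intro t ht
        have htpos : 0 < t := lt_of_lt_of_le hTpos ht
        exact ((hf t htpos).mul (hge t)).continuousAt.continuousWithinAt
      · intro t ht
        rw [interior_Ici] at ht
        have htpos : 0 < t := lt_trans hTpos ht
        exact ((hf t htpos).mul (hge t)).differentiableAt.differentiableWithinAt
      · intro t ht
        rw [interior_Ici] at ht
        have htpos : 0 < t := lt_trans hTpos ht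
        have hd := (hf t htpos).mul (hge t)
        rw [(show HasDerivAt (fun s => (1 - α k s ^ 2) * Real.exp (2 * ε * s)) _ t from hd).deriv]
        have hevt : ε ≤ α (k + 1) t * α k t - α k t * α (k - 1) t :=
          hT₀ t (le_trans (le_max_left _ _) ht.le)
        have hE : (0 : ℝ) < Real.exp (2 * ε * t) := Real.exp_pos _
        have hf0 : (0 : ℝ) ≤ 1 - α k t ^ 2 := (hpos t htpos.le).le
        nlinarith [mul_nonneg (mul_nonneg hE.le hf0)
          (sub_nonneg.mpr hevt)]
    set C0 : ℝ := (1 - α k T ^ 2) * Real.exp (2 * ε * T) with hC0def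
    have hC0pos : 0 < C0 := mul_pos (hpos T hTpos.le) (Real.exp_pos _)
    have hbound : ∀ t : ℝ, T ≤ t → 1 - α k t ^ 2 ≤ C0 * Real.exp (-(2 * ε * t)) := by
      intro t ht
      have h := hanti (Set.self_mem_Ici) (Set.mem_Ici.mpr ht) ht
      have hE : (0 : ℝ) < Real.exp (2 * ε * t) := Real.exp_pos _
      rw [show C0 * Real.exp (-(2 * ε * t)) = C0 / Real.exp (2 * ε * t) by
        rw [Real.exp_neg]; ring]
      exact (le_div_iff₀ hE).mpr h
    have hat : Tendsto (fun t : ℝ => 2 * ε * t) atTop atTop :=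
      Tendsto.const_mul_atTop (by positivity) tendsto_id
    have hexp0 : Tendsto (fun t : ℝ => Real.exp (-(2 * ε * t))) atTop (nhds 0) :=
      Real.tendsto_exp_atBot.comp (tendsto_neg_atTop_atBot.comp hat)
    have h1lim : Tendsto (fun t : ℝ => C0 * Real.exp (-(2 * ε * t))) atTop (nhds 0) := by
      have := hexp0.const_mul C0
      simpa using this
    have h2lim : Tendsto (fun t : ℝ => 2 * t * (C0 * Real.exp (-(2 * ε * t)))) atTop (nhds 0) := by
      have hx := (Real.tendsto_pow_mul_exp_neg_atTop_nhds_zero 1).comp hat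
      have hy := hx.const_mul (C0 / ε)
      simp only [mul_zero] at hy
      apply hy.congr
      intro t
      simp only [Function.comp]
      field_simp
    have hfin : ∀ᶠ t : ℝ in atTop, T ≤ t ∧ C0 * Real.exp (-(2 * ε * t)) < 1 / 2 ∧
        2 * t * (C0 * Real.exp (-(2 * ε * t))) < 1 / 2 := by
      filter_upwards [eventually_ge_atTop T,
        h1lim.eventually (eventually_lt_nhds (by norm_num : (0:ℝ) < 1 / 2)),
        h2lim.eventually (eventually_lt_nhds (by norm_num : (0:ℝ) < 1 / 2))] with t h1 h2 h3
      exact ⟨h1, h2, h3⟩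
    obtain ⟨t, htT, hsmall1, hsmall2⟩ := hfin.exists
    have htpos : 0 < t := lt_of_lt_of_le hTpos htT
    have hfpos : 0 < 1 - α k t ^ 2 := hpos t htpos.le
    have hp := hP2 k hk t htpos
    rw [div_eq_iff (by positivity)] at hp
    have hb : |α (k + 1) t| ≤ 1 := (hmem (k + 1) (by omega) t htpos.le).le
    have hc : |α (k - 1) t| ≤ 1 := by
      rcases eq_or_lt_of_le hk with h | h
      · rw [← h]
        norm_num [hneg t]
      · exact (hmem (k - 1) (by omega) t htpos.le).le
    have hknn : (0 : ℝ) ≤ (k : ℝ) := by exact_mod_cast hk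
    have habs : ((k : ℝ) + 1) * |α k t| ≤ 2 * (t * (1 - α k t ^ 2)) := by
      calc ((k : ℝ) + 1) * |α k t| = |(-((k : ℝ) + 1)) * α k t| := by
            rw [abs_mul, abs_neg, abs_of_nonneg (show (0:ℝ) ≤ (k:ℝ)+1 by linarith)]
        _ = |α (k + 1) t + α (k - 1) t| * |t * (1 - α k t ^ 2)| := by
            rw [hp, abs_mul]
        _ = |α (k + 1) t + α (k - 1) t| * (t * (1 - α k t ^ 2)) := by
            rw [abs_of_nonneg (mul_nonneg htpos.le hfpos.le)]
        _ ≤ 2 * (t * (1 - α k t ^ 2)) := by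
            apply mul_le_mul_of_nonneg_right _ (by positivity)
            calc |α (k + 1) t + α (k - 1) t| ≤ |α (k + 1) t| + |α (k - 1) t| := abs_add_le _ _
              _ ≤ 2 := by linarith
    have hfb := hbound t htT
    have habs2 : |α k t| < 1 / 2 := by
      have h1 : |α k t| ≤ ((k : ℝ) + 1) * |α k t| := by
        nlinarith [abs_nonneg (α k t)]
      have h2 : 2 * (t * (1 - α k t ^ 2)) ≤ 2 * t * (C0 * Real.exp (-(2 * ε * t))) := by
        nlinarith
      linarith
    have hsq : 1 / 2 < α k t ^ 2 := by linarith
    nlinarith [sq_abs (α k t), abs_nonneg (α k t)]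
  have keq : ∀ k : ℤ, 0 ≤ k → γ k = γ (k + 1) := fun k hk =>
    le_antisymm (hmono k hk) (key k hk)
  have h2 : ∀ m n : ℤ, 0 ≤ m → m ≤ n → γ m = γ n := by
    intro m n hm hmn
    exact Int.le_induction (motive := fun n _ => γ m = γ n) rfl
      (fun n hn ih => by rw [ih, keq n (le_trans hm hn)]) n hmn
  intro m n hm hn
  rcases le_total m n with h | h
  · exact h2 m n hm h
  · exact (h2 n m hn h).symm
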